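/- Suppose -b > 2a > 0 and c is real with 4ac < b², and ω ∈ ℝ. Then |iω - b + √((iω-b)² - 4ac)| > 2a, hence |r₋| < 1 where r₋ = 2a/(iω - b + √((iω-b)²-4ac)). -/

import Mathlib

/-- Real part of a complex half power is nonnegative. -/
lemma re_cpow_half_nonneg (u : ℂ) : 0 ≤ (u ^ ((1 : ℂ) / 2)).re := by
  rcases eq_or_ne u 0 with h | h
  · rw [h, Complex.zero_cpow (by norm_num)]
    simp
  · rw [Complex.cpow_def_of_ne_zero h, Complex.exp_re]
    apply mul_nonneg (Real.exp_pos _).le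
    apply Real.cos_nonneg_of_mem_Icc
    have him : (Complex.log u * (1 / 2)).im = u.arg / 2 := by
      simp [Complex.log_im, div_eq_mul_inv]
    rw [him]
    constructor
    · have := Complex.neg_pi_lt_arg u
      linarith
    · have := Complex.arg_le_pi u
      linarith

/-- If `-b > 2a > 0` and `4ac < b²`, then `|iω - b + √((iω-b)² - 4ac)| > 2a`,
hence `|r₋| < 1`. -/
theorem stmt_15 (a b c : ℝ) (hab : 2 * a < -b) (ha : 0 < a)
    (h4ac : 4 * a * c < b ^ 2) (ω : ℝ) :
    2 * a <
      ‖(Complex.I * (ω : ℂ) - (b : ℂ) +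
        ((Complex.I * (ω : ℂ) - (b : ℂ)) ^ 2 - 4 * (a : ℂ) * (c : ℂ)) ^
          ((1 : ℂ) / 2))‖ ∧
    ‖((2 * (a : ℂ)) /
      (Complex.I * (ω : ℂ) - (b : ℂ) +
        ((Complex.I * (ω : ℂ) - (b : ℂ)) ^ 2 - 4 * (a : ℂ) * (c : ℂ)) ^
          ((1 : ℂ) / 2)))‖ < 1 := by
  set w : ℂ := ((Complex.I * (ω : ℂ) - (b : ℂ)) ^ 2 - 4 * (a : ℂ) * (c : ℂ)) ^
      ((1 : ℂ) / 2) with hw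
  set z : ℂ := Complex.I * (ω : ℂ) - (b : ℂ) + w with hz
  have hwre : 0 ≤ w.re := re_cpow_half_nonneg _
  have hzre : 2 * a < z.re := by
    have : z.re = -b + w.re := by
      simp [hz, Complex.add_re, Complex.sub_re, Complex.mul_re]
    rw [this]; linarith
  have habs : 2 * a < ‖z‖ := lt_of_lt_of_le hzre (Complex.re_le_norm z)
  refine ⟨habs, ?_⟩
  have h2a : (0 : ℝ) < 2 * a := by linarith
  rw [norm_div]
  have h2 : ‖(2 * (a : ℂ))‖ = 2 * a := by
    rw [show (2 * (a : ℂ)) = ((2 * a : ℝ) : ℂ) by push_cast; ring,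
      Complex.norm_real, Real.norm_eq_abs, abs_of_pos h2a]
  rw [h2, div_lt_one (lt_trans h2a habs)]
  exact habs
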